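/- With K = n_r - r + 1 and M_r = C(r+K-2, r-1), if ‖h‖_{ℓ¹} < 1 + ε then every block of G_N satisfies ‖(G_N)_{i,j}‖ ≤ (2+ε)M_r for 0 < i-j < K, and consequently sup_{N} ‖G_N‖ ≤ (2+ε) M_r K < ∞. -/

import Mathlib

noncomputable section

/-- The orthogonal projection onto `W`, as a continuous endomorphism of the ambient space. -/
def projCLM {d : ℕ} (W : Submodule ℝ (EuclideanSpace ℝ (Fin d))) :
    EuclideanSpace ℝ (Fin d) →L[ℝ] EuclideanSpace ℝ (Fin d) :=
  W.subtypeL.comp (Submodule.orthogonalProjection W)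

/-- The composition `P_{W_i} P_{W_{i-1}} ⋯ P_{W_{j+1}}` (equal to `1` when `i ≤ j`). -/
def projChainCLM {d : ℕ} (W : ℕ → Submodule ℝ (EuclideanSpace ℝ (Fin d))) (i j : ℕ) :
    EuclideanSpace ℝ (Fin d) →L[ℝ] EuclideanSpace ℝ (Fin d) :=
  (((List.range (i - j)).map fun t => projCLM (W (i - t)))).prod

lemma norm_projCLM_le {d : ℕ} (W : Submodule ℝ (EuclideanSpace ℝ (Fin d))) :
    ‖projCLM W‖ ≤ 1 := by
  refine ContinuousLinearMap.opNorm_le_bound _ zero_le_one fun x => ?_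
  rw [one_mul]
  calc ‖projCLM W x‖ = ‖Submodule.orthogonalProjection W x‖ := rfl
    _ ≤ ‖Submodule.orthogonalProjection W‖ * ‖x‖ := (Submodule.orthogonalProjection W).le_opNorm x
    _ ≤ 1 * ‖x‖ :=
      mul_le_mul_of_nonneg_right (Submodule.orthogonalProjectionOnto_norm_le W) (norm_nonneg x)
    _ = ‖x‖ := one_mul _

lemma aux_norm_prod_le_one {d : ℕ}
    (l : List (EuclideanSpace ℝ (Fin d) →L[ℝ] EuclideanSpace ℝ (Fin d)))
    (hl : ∀ a ∈ l, ‖a‖ ≤ 1) : ‖l.prod‖ ≤ 1 := by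
  induction l with
  | nil =>
    rw [List.prod_nil, ContinuousLinearMap.one_def]
    exact ContinuousLinearMap.norm_id_le
  | cons a t ih =>
    rw [List.prod_cons]
    calc ‖a * t.prod‖ ≤ ‖a‖ * ‖t.prod‖ := norm_mul_le _ _
      _ ≤ 1 * 1 := mul_le_mul (hl a (by simp)) (ih fun b hb => hl b (by simp [hb]))
            (norm_nonneg _) zero_le_one
      _ = 1 := one_mul 1

lemma norm_projChainCLM_le {d : ℕ} (W : ℕ → Submodule ℝ (EuclideanSpace ℝ (Fin d)))
    (i j : ℕ) : ‖projChainCLM W i j‖ ≤ 1 := by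
  apply aux_norm_prod_le_one
  intro a ha
  simp only [List.mem_map, List.mem_range] at ha
  obtain ⟨t, _, rfl⟩ := ha
  exact norm_projCLM_le _

open Finset in
/-- the band of indices `j ≤ i` with `i - j < K`. -/
def bandSet (N K : ℕ) (i : Fin N) : Finset (Fin N) :=
  Finset.univ.filter fun j => (j : ℕ) ≤ i ∧ (i : ℕ) - j < K

/-- the co-band of indices `i ≥ j` with `i - j < K`. -/
def cobSet (N K : ℕ) (j : Fin N) : Finset (Fin N) :=
  Finset.univ.filter fun i => (j : ℕ) ≤ i ∧ (i : ℕ) - j < K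

lemma card_bandSet_le (N K : ℕ) (i : Fin N) : (bandSet N K i).card ≤ K := by
  classical
  have h : (bandSet N K i).card ≤ (Finset.range K).card := by
    apply Finset.card_le_card_of_injOn (fun j : Fin N => (i : ℕ) - j)
    · intro j hj
      simp only [Finset.mem_coe, bandSet, Finset.mem_filter, Finset.mem_univ, true_and] at hj
      simp only [Finset.mem_coe, Finset.mem_range]
      omega
    · intro a ha b hb hab
      simp only [Finset.mem_coe, bandSet, Finset.mem_filter, Finset.mem_univ, true_and] at ha hb
      have hab' : (i : ℕ) - (a : ℕ) = (i : ℕ) - (b : ℕ) := hab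
      exact Fin.ext (by omega)
  simpa using h

lemma card_cobSet_le (N K : ℕ) (j : Fin N) : (cobSet N K j).card ≤ K := by
  classical
  have h : (cobSet N K j).card ≤ (Finset.range K).card := by
    apply Finset.card_le_card_of_injOn (fun i : Fin N => (i : ℕ) - j)
    · intro i hi
      simp only [Finset.mem_coe, cobSet, Finset.mem_filter, Finset.mem_univ, true_and] at hi
      simp only [Finset.mem_coe, Finset.mem_range]
      omega
    · intro a ha b hb hab
      simp only [Finset.mem_coe, cobSet, Finset.mem_filter, Finset.mem_univ, true_and] at ha hb
      have hab' : (a : ℕ) - (j : ℕ) = (b : ℕ) - (j : ℕ) := hab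
      exact Fin.ext (by omega)
  simpa using h

lemma bandSet_swap (N K : ℕ) (f : Fin N → ℝ) :
    ∑ i : Fin N, ∑ j ∈ bandSet N K i, f j
      = ∑ j : Fin N, ((cobSet N K j).card : ℝ) * f j := by
  classical
  simp only [bandSet, Finset.sum_filter]
  rw [Finset.sum_comm]
  refine Finset.sum_congr rfl fun j _ => ?_
  rw [cobSet, ← Finset.sum_filter, Finset.sum_const, nsmul_eq_mul]

/-- With `K = n_r - r + 1` and `M_r = C(r+K-2, r-1)`, if `‖h‖_{ℓ¹} < 1 + ε` then every
off-diagonal block of `G_N` has norm at most `(2+ε)M_r`, and `‖G_N‖ ≤ (2+ε)·M_r·K`. -/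
theorem stmt_15 (d N r σ : ℕ) (hr : 1 ≤ r) (hσ : 1 ≤ σ) (hN : 1 ≤ N)
    (nn : ℕ → ℕ) (hnn : ∀ j, nn j = σ * (j - 1) ^ 2 + 1)
    (ε : ℝ) (hε : 0 < ε)
    (h : ℕ → ℝ) (hh : ∀ n : ℕ, ∑ l ∈ Finset.Icc 1 n, |h l| < 1 + ε)
    (W : ℕ → Submodule ℝ (EuclideanSpace ℝ (Fin d)))
    (G : Fin N → Fin N → EuclideanSpace ℝ (Fin d) →L[ℝ] EuclideanSpace ℝ (Fin d))
    (hG : ∀ i j : Fin N, G i j =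
      if i = j then 1
      else if (j : ℕ) < (i : ℕ) ∧ (i : ℕ) - (j : ℕ) < nn r - r + 1 then
        ((Nat.choose (r + (i : ℕ) - (j : ℕ) - 1) (r - 1) : ℝ) -
          ∑ l ∈ Finset.Icc 1 ((i : ℕ) - (j : ℕ)),
            (Nat.choose (r + (i : ℕ) - (j : ℕ) - l - 1) (r - 1) : ℝ) * h l) •
          projChainCLM W (i : ℕ) (j : ℕ)
      else 0) :
    (∀ i j : Fin N, (j : ℕ) < (i : ℕ) → (i : ℕ) - (j : ℕ) < nn r - r + 1 →
      ‖G i j‖ ≤ (2 + ε) * (Nat.choose (r + (nn r - r + 1) - 2) (r - 1) : ℝ)) ∧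
    (∀ v : Fin N → EuclideanSpace ℝ (Fin d),
      Real.sqrt (∑ i, ‖∑ j, G i j (v j)‖ ^ 2) ≤
        (2 + ε) * (Nat.choose (r + (nn r - r + 1) - 2) (r - 1) : ℝ) * (nn r - r + 1 : ℕ) *
          Real.sqrt (∑ i, ‖v i‖ ^ 2)) := by
  classical
  set K := nn r - r + 1 with hKdef
  set M : ℝ := (Nat.choose (r + K - 2) (r - 1) : ℝ) with hMdef
  have hK1 : 1 ≤ K := Nat.le_add_left 1 _
  have hM0 : (0:ℝ) ≤ M := Nat.cast_nonneg _
  have hM1 : (1:ℝ) ≤ M := by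
    have h1 : 1 ≤ Nat.choose (r + K - 2) (r - 1) := Nat.choose_pos (by omega)
    rw [hMdef]
    exact_mod_cast h1
  have hC0 : (0:ℝ) ≤ (2 + ε) * M := mul_nonneg (by linarith) hM0
  -- bound on all blocks
  have hbound : ∀ i j : Fin N, ‖G i j‖ ≤ (2 + ε) * M := by
    intro i j
    rw [hG i j]
    split_ifs with h1 h2
    · calc ‖(1 : EuclideanSpace ℝ (Fin d) →L[ℝ] EuclideanSpace ℝ (Fin d))‖ ≤ 1 := by
            rw [ContinuousLinearMap.one_def]; exact ContinuousLinearMap.norm_id_le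
        _ ≤ (2 + ε) * M := by nlinarith
    · obtain ⟨hji, hij⟩ := h2
      refine le_trans (ContinuousLinearMap.opNorm_smul_le _ _) ?_
      rw [Real.norm_eq_abs]
      have hA : ((r + (i:ℕ) - (j:ℕ) - 1).choose (r-1) : ℝ) ≤ M := by
        have : (r + (i:ℕ) - (j:ℕ) - 1).choose (r-1) ≤ (r + K - 2).choose (r-1) :=
          Nat.choose_le_choose _ (by omega)
        rw [hMdef]
        exact_mod_cast this
      have hSb : |∑ l ∈ Finset.Icc 1 ((i:ℕ) - (j:ℕ)),
          ((r + (i:ℕ) - (j:ℕ) - l - 1).choose (r-1) : ℝ) * h l| ≤ M * (1 + ε) := by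
        calc |∑ l ∈ Finset.Icc 1 ((i:ℕ) - (j:ℕ)),
              ((r + (i:ℕ) - (j:ℕ) - l - 1).choose (r-1) : ℝ) * h l|
            ≤ ∑ l ∈ Finset.Icc 1 ((i:ℕ) - (j:ℕ)),
              |((r + (i:ℕ) - (j:ℕ) - l - 1).choose (r-1) : ℝ) * h l| :=
              Finset.abs_sum_le_sum_abs _ _
          _ ≤ ∑ l ∈ Finset.Icc 1 ((i:ℕ) - (j:ℕ)), M * |h l| := by
              apply Finset.sum_le_sum
              intro l hl
              simp only [Finset.mem_Icc] at hl
              rw [abs_mul, abs_of_nonneg (Nat.cast_nonneg _)]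
              have hc : (r + (i:ℕ) - (j:ℕ) - l - 1).choose (r-1)
                  ≤ (r + K - 2).choose (r-1) := Nat.choose_le_choose _ (by omega)
              exact mul_le_mul_of_nonneg_right (by rw [hMdef]; exact_mod_cast hc) (abs_nonneg _)
          _ = M * ∑ l ∈ Finset.Icc 1 ((i:ℕ) - (j:ℕ)), |h l| := by rw [Finset.mul_sum]
          _ ≤ M * (1 + ε) :=
              mul_le_mul_of_nonneg_left (le_of_lt (hh _)) hM0
      have habs : |((r + (i:ℕ) - (j:ℕ) - 1).choose (r-1) : ℝ) -
          ∑ l ∈ Finset.Icc 1 ((i:ℕ) - (j:ℕ)),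
            ((r + (i:ℕ) - (j:ℕ) - l - 1).choose (r-1) : ℝ) * h l| ≤ (2 + ε) * M := by
        calc |((r + (i:ℕ) - (j:ℕ) - 1).choose (r-1) : ℝ) -
              ∑ l ∈ Finset.Icc 1 ((i:ℕ) - (j:ℕ)),
                ((r + (i:ℕ) - (j:ℕ) - l - 1).choose (r-1) : ℝ) * h l|
            ≤ |((r + (i:ℕ) - (j:ℕ) - 1).choose (r-1) : ℝ)| +
              |∑ l ∈ Finset.Icc 1 ((i:ℕ) - (j:ℕ)),
                ((r + (i:ℕ) - (j:ℕ) - l - 1).choose (r-1) : ℝ) * h l| := abs_sub _ _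
          _ ≤ M + M * (1 + ε) :=
              add_le_add (by rw [abs_of_nonneg (Nat.cast_nonneg _)]; exact hA) hSb
          _ = (2 + ε) * M := by ring
      calc |((r + (i:ℕ) - (j:ℕ) - 1).choose (r-1) : ℝ) -
              ∑ l ∈ Finset.Icc 1 ((i:ℕ) - (j:ℕ)),
                ((r + (i:ℕ) - (j:ℕ) - l - 1).choose (r-1) : ℝ) * h l|
            * ‖projChainCLM W (i:ℕ) (j:ℕ)‖
          ≤ ((2 + ε) * M) * 1 :=
            mul_le_mul habs (norm_projChainCLM_le W _ _) (norm_nonneg _) hC0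
        _ = (2 + ε) * M := mul_one _
    · rw [norm_zero]; exact hC0
  refine ⟨fun i j _ _ => hbound i j, ?_⟩
  -- vanishing outside band
  have hsupp : ∀ i j : Fin N, ¬((j:ℕ) ≤ (i:ℕ) ∧ (i:ℕ) - (j:ℕ) < K) → G i j = 0 := by
    intro i j hP
    have h1 : ¬ i = j := by rintro rfl; exact hP ⟨le_refl _, by omega⟩
    have h2 : ¬ ((j:ℕ) < (i:ℕ) ∧ (i:ℕ) - (j:ℕ) < K) :=
      fun hc => hP ⟨le_of_lt hc.1, hc.2⟩
    rw [hG i j, if_neg h1, if_neg h2]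
  intro v
  have hrow : ∀ i : Fin N, ‖∑ j, G i j (v j)‖
      ≤ (2 + ε) * M * ∑ j ∈ bandSet N K i, ‖v j‖ := by
    intro i
    calc ‖∑ j, G i j (v j)‖ ≤ ∑ j, ‖G i j (v j)‖ := norm_sum_le _ _
      _ = ∑ j ∈ bandSet N K i, ‖G i j (v j)‖ := by
          symm
          apply Finset.sum_subset (Finset.subset_univ _)
          intro x _ hx
          have hx' : ¬((x:ℕ) ≤ (i:ℕ) ∧ (i:ℕ) - (x:ℕ) < K) := by
            simpa [bandSet, Finset.mem_filter] using hx
          rw [hsupp i x hx']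
          simp
      _ ≤ ∑ j ∈ bandSet N K i, (2 + ε) * M * ‖v j‖ :=
          Finset.sum_le_sum fun j _ =>
            ((G i j).le_opNorm (v j)).trans
              (mul_le_mul_of_nonneg_right (hbound i j) (norm_nonneg _))
      _ = (2 + ε) * M * ∑ j ∈ bandSet N K i, ‖v j‖ := by rw [Finset.mul_sum]
  set C : ℝ := (2 + ε) * M with hCdef
  have hrowsq : ∀ i : Fin N, ‖∑ j, G i j (v j)‖ ^ 2
      ≤ C ^ 2 * ((K:ℝ) * ∑ j ∈ bandSet N K i, ‖v j‖ ^ 2) := by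
    intro i
    have h1 : ‖∑ j, G i j (v j)‖ ^ 2 ≤ (C * ∑ j ∈ bandSet N K i, ‖v j‖) ^ 2 := by
      apply pow_le_pow_left₀ (norm_nonneg _) (hrow i)
    have h2 : (∑ j ∈ bandSet N K i, ‖v j‖) ^ 2
        ≤ ((bandSet N K i).card : ℝ) * ∑ j ∈ bandSet N K i, ‖v j‖ ^ 2 :=
      sq_sum_le_card_mul_sum_sq
    have h3 : ((bandSet N K i).card : ℝ) ≤ (K : ℝ) := by
      exact_mod_cast card_bandSet_le N K i
    have h4 : (0:ℝ) ≤ ∑ j ∈ bandSet N K i, ‖v j‖ ^ 2 :=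
      Finset.sum_nonneg fun _ _ => sq_nonneg _
    calc ‖∑ j, G i j (v j)‖ ^ 2 ≤ (C * ∑ j ∈ bandSet N K i, ‖v j‖) ^ 2 := h1
      _ = C ^ 2 * (∑ j ∈ bandSet N K i, ‖v j‖) ^ 2 := by ring
      _ ≤ C ^ 2 * (((bandSet N K i).card : ℝ) * ∑ j ∈ bandSet N K i, ‖v j‖ ^ 2) :=
          mul_le_mul_of_nonneg_left h2 (sq_nonneg _)
      _ ≤ C ^ 2 * ((K:ℝ) * ∑ j ∈ bandSet N K i, ‖v j‖ ^ 2) :=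
          mul_le_mul_of_nonneg_left (mul_le_mul_of_nonneg_right h3 h4) (sq_nonneg _)
  have hswap : ∑ i : Fin N, ∑ j ∈ bandSet N K i, ‖v j‖ ^ 2
      ≤ (K:ℝ) * ∑ j, ‖v j‖ ^ 2 := by
    rw [bandSet_swap N K (fun j => ‖v j‖ ^ 2), Finset.mul_sum]
    apply Finset.sum_le_sum
    intro j _
    have h3 : ((cobSet N K j).card : ℝ) ≤ (K : ℝ) := by
      exact_mod_cast card_cobSet_le N K j
    exact mul_le_mul_of_nonneg_right h3 (sq_nonneg _)
  have hStotal : ∑ i, ‖∑ j, G i j (v j)‖ ^ 2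
      ≤ (C * (K:ℝ)) ^ 2 * ∑ i, ‖v i‖ ^ 2 := by
    calc ∑ i, ‖∑ j, G i j (v j)‖ ^ 2
        ≤ ∑ i : Fin N, C ^ 2 * ((K:ℝ) * ∑ j ∈ bandSet N K i, ‖v j‖ ^ 2) :=
          Finset.sum_le_sum fun i _ => hrowsq i
      _ = C ^ 2 * (K:ℝ) * ∑ i : Fin N, ∑ j ∈ bandSet N K i, ‖v j‖ ^ 2 := by
          rw [Finset.mul_sum]
          exact Finset.sum_congr rfl fun i _ => by ring
      _ ≤ C ^ 2 * (K:ℝ) * ((K:ℝ) * ∑ j, ‖v j‖ ^ 2) := by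
          apply mul_le_mul_of_nonneg_left hswap
          exact mul_nonneg (sq_nonneg _) (Nat.cast_nonneg _)
      _ = (C * (K:ℝ)) ^ 2 * ∑ i, ‖v i‖ ^ 2 := by ring
  have hCK0 : (0:ℝ) ≤ C * (K:ℝ) := mul_nonneg hC0 (Nat.cast_nonneg _)
  calc Real.sqrt (∑ i, ‖∑ j, G i j (v j)‖ ^ 2)
      ≤ Real.sqrt ((C * (K:ℝ)) ^ 2 * ∑ i, ‖v i‖ ^ 2) := Real.sqrt_le_sqrt hStotal
    _ = (C * (K:ℝ)) * Real.sqrt (∑ i, ‖v i‖ ^ 2) := by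
        rw [Real.sqrt_mul (sq_nonneg _), Real.sqrt_sq hCK0]
    _ = (2 + ε) * M * (K:ℕ) * Real.sqrt (∑ i, ‖v i‖ ^ 2) := by rw [hCdef]
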